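/- Let C be a virtually cyclic group and let G = A ∗_C B be an amalgamated free product of groups A and B over C (via injective homomorphisms C → A and C → B). If A and B are balanced, then G is balanced. -/

import Mathlib

def IsBalancedGroup (G : Type*) [Group G] : Prop :=
  ∀ g : G, ¬ IsOfFinOrder g → ∀ h : G, ∀ n m : ℤ, h * g ^ n * h⁻¹ = g ^ m → |n| = |m|

universe u

/-- The family with value `A` at `true` and `B` at `false`. -/
def fam (A B : Type u) : Bool → Type u
  | true => A
  | false => B

instance famGroup (A B : Type u) [Group A] [Group B] : (b : Bool) → Group (fam A B b)
  | true => inferInstanceAs (Group A)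
  | false => inferInstanceAs (Group B)

/-- The pair of homomorphisms from the amalgamated subgroup. -/
def famHom {A B C : Type u} [Group A] [Group B] [Group C] (f : C →* A) (g : C →* B) :
    (b : Bool) → C →* fam A B b
  | true => f
  | false => g

/-- The amalgamated free product `A ∗_C B`. -/
abbrev AmalgamatedProduct {A B C : Type u} [Group A] [Group B] [Group C]
    (f : C →* A) (g : C →* B) : Type _ :=
  Monoid.PushoutI (famHom f g)



open Monoid CoprodI Subgroup Function List Monoid.PushoutI Monoid.PushoutI.NormalWord

section Lengths

variable {ι : Type*} {G : ι → Type*} {H : Type*} [∀ i, Group (G i)] [Group H]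
  (φ : ∀ i, H →* G i)

/-- product of a list of letters -/
def prodOf (l : List (Σ i, G i)) : PushoutI φ :=
  (l.map fun p => of (φ := φ) p.fst p.snd).prod

@[simp] theorem prodOf_nil : prodOf φ ([] : List (Σ i, G i)) = 1 := rfl

@[simp] theorem prodOf_cons (p : Σ i, G i) (l : List (Σ i, G i)) :
    prodOf φ (p :: l) = of (φ := φ) p.fst p.snd * prodOf φ l := by
  simp [prodOf]

theorem prodOf_append (l₁ l₂ : List (Σ i, G i)) :
    prodOf φ (l₁ ++ l₂) = prodOf φ l₁ * prodOf φ l₂ := by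
  simp [prodOf]

/-- a reduced list of letters -/
def RL (l : List (Σ i, G i)) : Prop :=
  l.Chain' (fun a b => a.fst ≠ b.fst) ∧ ∀ p ∈ l, p.snd ≠ 1 ∧ p.snd ∉ (φ p.fst).range

theorem RL.nil : RL φ ([] : List (Σ i, G i)) := ⟨List.isChain_nil, by simp⟩

/-- word from a reduced list -/
def mkWord (l : List (Σ i, G i)) (h : RL φ l) : Word G :=
  ⟨l, fun p hp => (h.2 p hp).1, h.1⟩

theorem mkWord_reduced (l : List (Σ i, G i)) (h : RL φ l) : Reduced φ (mkWord φ l h) :=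
  fun p hp => (h.2 p hp).2

theorem ofCoprodI_word_prod (w : Word G) :
    ofCoprodI (w.prod) = prodOf φ w.toList := by
  rw [Word.prod, map_list_prod, prodOf, List.map_map]
  congr 1

variable {d : Transversal φ}

theorem NW_prod_eq (w : NormalWord d) :
    w.prod = base φ w.head * prodOf φ w.toList := by
  rw [NormalWord.prod, ofCoprodI_word_prod]

theorem transversal_not_range {i : ι} {g : G i} (hg : g ∈ d.set i) (hg1 : g ≠ 1) :
    g ∉ (φ i).range := by
  intro hr
  have h := (d.compl i).1 (a₁ := ⟨⟨g, hr⟩, ⟨1, d.one_mem i⟩⟩)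
    (a₂ := ⟨⟨1, one_mem _⟩, ⟨g, hg⟩⟩) (by simp)
  apply hg1
  have := congrArg (fun p => (p.1 : G i)) h
  simpa using this

theorem NW_RL (w : NormalWord d) : RL φ w.toList :=
  ⟨w.chain_ne, fun p hp => ⟨w.ne_one p hp,
    transversal_not_range φ (w.normalized p.fst p.snd hp) (w.ne_one p hp)⟩⟩

end Lengths
section Len
variable {ι : Type*} {G : ι → Type*} {H : Type*} [∀ i, Group (G i)] [Group H]
  [DecidableEq ι] [∀ i, DecidableEq (G i)]
  {φ : ∀ i, H →* G i} (d : Transversal φ)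

/-- length of the normal form of an element -/
noncomputable def ell (x : PushoutI φ) : ℕ :=
  ((NormalWord.equiv (d := d) x).toList).length

theorem equiv_prod_eq (w : NormalWord d) : NormalWord.equiv (w.prod) = w := by
  rw [show w.prod = (NormalWord.equiv (d := d)).symm w from rfl, Equiv.apply_symm_apply]

theorem prod_equiv_eq (x : PushoutI φ) : (NormalWord.equiv (d := d) x).prod = x :=
  (NormalWord.equiv (d := d)).symm_apply_apply x

theorem ell_prod (w : NormalWord d) : ell d (w.prod) = w.toList.length := by
  rw [ell, equiv_prod_eq]

theorem equiv_mul (x y : PushoutI φ) :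
    NormalWord.equiv (d := d) (x * y) = x • NormalWord.equiv (d := d) y := by
  show (x * y) • (NormalWord.empty : NormalWord d) = x • (y • (NormalWord.empty : NormalWord d))
  rw [mul_smul]

theorem ell_base_mul (c : H) (x : PushoutI φ) : ell d (base φ c * x) = ell d x := by
  rw [ell, ell, equiv_mul, base_smul_def]

theorem ell_prodOf {l : List (Σ i, G i)} (hl : RL φ l) : ell d (prodOf φ l) = l.length := by
  rcases (mkWord_reduced φ l hl).exists_normalWord_prod_eq d with ⟨w', hw1, hw2⟩
  have : prodOf φ l = w'.prod := by
    rw [hw1, ofCoprodI_word_prod]; rfl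
  rw [this, ell_prod]
  have := congrArg List.length hw2
  simpa [mkWord] using this

/-- decomposition of an arbitrary element -/
theorem exists_decomp (x : PushoutI φ) : ∃ (c : H) (l : List (Σ i, G i)),
    RL φ l ∧ x = base φ c * prodOf φ l ∧ ell d x = l.length := by
  refine ⟨(NormalWord.equiv (d := d) x).head, (NormalWord.equiv (d := d) x).toList,
    NW_RL φ _, ?_, rfl⟩
  conv_lhs => rw [← prod_equiv_eq d x]
  rw [NW_prod_eq]

theorem ell_one : ell d (1 : PushoutI φ) = 0 := by
  have : (1 : PushoutI φ) = (NormalWord.empty (d := d)).prod := by simp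
  rw [this, ell_prod]; rfl

theorem ell_of_mul_prodOf_le (i : ι) (g : G i) {l : List (Σ i, G i)} (hl : RL φ l) :
    ell d (of i g * prodOf φ l) ≤ l.length + 1 := by
  by_cases hr : g ∈ (φ i).range
  · rcases hr with ⟨c', rfl⟩
    rw [of_apply_eq_base, ell_base_mul, ell_prodOf d hl]
    omega
  · rcases l with _ | ⟨⟨k, a⟩, l'⟩
    · have hRL : RL φ [⟨i, g⟩] := by
        refine ⟨List.isChain_singleton _, ?_⟩
        rintro p hp
        simp only [List.mem_singleton] at hp
        subst hp
        exact ⟨fun h1 => hr (by rw [show g = 1 from h1]; exact one_mem _), hr⟩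
      have h2 : of (φ := φ) i g * prodOf φ [] = prodOf φ [⟨i, g⟩] := by simp
      rw [h2, ell_prodOf d hRL]
      simp
    · by_cases hik : i = k
      · subst hik
        have hmul : of (φ := φ) i g * prodOf φ (⟨i, a⟩ :: l') =
            of i (g * a) * prodOf φ l' := by rw [prodOf_cons, ← mul_assoc, ← map_mul]
        have hl' : RL φ l' := ⟨hl.1.tail, fun p hp => hl.2 p (List.mem_cons_of_mem _ hp)⟩
        by_cases hr2 : g * a ∈ (φ i).range
        · rcases hr2 with ⟨c', hc'⟩
          rw [hmul, ← hc', of_apply_eq_base, ell_base_mul, ell_prodOf d hl']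
          simp; omega
        · have hcons : RL φ (⟨i, g * a⟩ :: l') := by
            refine ⟨?_, ?_⟩
            · refine List.IsChain.cons hl'.1 ?_
              intro b hb
              have := hl.1
              rcases l' with _ | ⟨q, l''⟩
              · simp at hb
              · simp at hb
                subst hb
                exact (List.isChain_cons_cons.1 this).1
            · rintro p hp
              rcases List.mem_cons.1 hp with rfl | hp
              · exact ⟨fun h1 => hr2 (by rw [show g * a = 1 from h1]; exact one_mem _), hr2⟩
              · exact hl'.2 p hp
          rw [hmul, show of (φ := φ) i (g * a) * prodOf φ l' = prodOf φ (⟨i, g * a⟩ :: l')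
            by simp, ell_prodOf d hcons]
          simp
      · have hcons : RL φ (⟨i, g⟩ :: ⟨k, a⟩ :: l') := by
          refine ⟨List.IsChain.cons hl.1 ?_, ?_⟩
          · intro b hb; simp at hb; subst hb; exact hik
          · rintro p hp
            rcases List.mem_cons.1 hp with rfl | hp
            · exact ⟨fun h1 => hr (by rw [show g = 1 from h1]; exact one_mem _), hr⟩
            · exact hl.2 p hp
        rw [show of (φ := φ) i g * prodOf φ (⟨k, a⟩ :: l') = prodOf φ (⟨i, g⟩ :: ⟨k, a⟩ :: l')
          by simp, ell_prodOf d hcons]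
        simp

theorem ell_of_mul_le (i : ι) (g : G i) (x : PushoutI φ) :
    ell d (of i g * x) ≤ ell d x + 1 := by
  rcases exists_decomp d x with ⟨c, l, hl, rfl, hlen⟩
  have hkey : of (φ := φ) i g * (base φ c * prodOf φ l) =
      base φ c * (of i (((φ i c)⁻¹ * g * (φ i c))) * prodOf φ l) := by
    rw [← of_apply_eq_base φ i]
    simp only [← mul_assoc, ← map_mul]
    congr 2
    group
  rw [hkey, ell_base_mul, hlen]
  exact ell_of_mul_prodOf_le d i _ hl

theorem ell_of_le_one (i : ι) (g : G i) : ell d (of (φ := φ) i g) ≤ 1 := by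
  have := ell_of_mul_le d i g 1
  rwa [mul_one, ell_one] at this

theorem ell_prodOf_mul_le (l : List (Σ i, G i)) (y : PushoutI φ) :
    ell d (prodOf φ l * y) ≤ l.length + ell d y := by
  induction l with
  | nil => simp
  | cons p l ih =>
    have : prodOf φ (p :: l) * y = of (φ := φ) p.fst p.snd * (prodOf φ l * y) := by
      simp [mul_assoc]
    rw [this]
    calc ell d _ ≤ ell d (prodOf φ l * y) + 1 := ell_of_mul_le d _ _ _
    _ ≤ l.length + ell d y + 1 := by omega
    _ = (p :: l).length + ell d y := by simp; omega

theorem ell_mul_le (x y : PushoutI φ) : ell d (x * y) ≤ ell d x + ell d y := by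
  rcases exists_decomp d x with ⟨c, l, hl, rfl, hlen⟩
  rw [mul_assoc, ell_base_mul, hlen]
  exact ell_prodOf_mul_le d l y

end Len
set_option linter.unusedSectionVars false
section Cyc
variable {ι : Type*} {G : ι → Type*} {H : Type*} [∀ i, Group (G i)] [Group H]
  [DecidableEq ι] [∀ i, DecidableEq (G i)]
  {φ : ∀ i, H →* G i} (d : Transversal φ)

/-- formal inverse of a list of letters -/
def invRev (l : List (Σ i, G i)) : List (Σ i, G i) :=
  (l.map fun p => ⟨p.fst, p.snd⁻¹⟩).reverse

@[simp] theorem invRev_length (l : List (Σ i, G i)) : (invRev l).length = l.length := by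
  simp [invRev]

theorem prodOf_invRev (l : List (Σ i, G i)) :
    prodOf φ (invRev l) = (prodOf φ l)⁻¹ := by
  induction l with
  | nil => simp [invRev]
  | cons p l ih =>
    simp only [invRev] at ih ⊢
    simp [prodOf_append, ih, mul_assoc]

theorem RL_invRev {l : List (Σ i, G i)} (hl : RL φ l) : RL φ (invRev l) := by
  constructor
  · rw [invRev, List.Chain', List.isChain_reverse]
    refine (List.isChain_map _).2 ?_
    exact hl.1.imp (fun a b h => by exact fun hh => h hh.symm)
  · intro p hp
    rw [invRev, List.mem_reverse, List.mem_map] at hp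
    rcases hp with ⟨q, hq, rfl⟩
    refine ⟨inv_ne_one.2 (hl.2 q hq).1, fun hr => (hl.2 q hq).2 ?_⟩
    simpa using inv_mem hr

/-- condition: head and last have distinct indices (cyclically reduced); vacuous on short lists -/
def CRH (l : List (Σ i, G i)) : Prop :=
  ∀ a b, l.head? = some a → l.getLast? = some b → a.fst ≠ b.fst

theorem invRev_head? (l : List (Σ i, G i)) :
    (invRev l).head? = l.getLast?.map fun p => ⟨p.fst, p.snd⁻¹⟩ := by
  rw [invRev, List.head?_reverse, List.getLast?_map]

theorem invRev_getLast? (l : List (Σ i, G i)) :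
    (invRev l).getLast? = l.head?.map fun p => ⟨p.fst, p.snd⁻¹⟩ := by
  rw [invRev, List.getLast?_reverse, List.head?_map]

theorem CRH_invRev {l : List (Σ i, G i)} (hl : CRH l) : CRH (invRev l) := by
  intro a b ha hb
  rw [invRev_head?] at ha
  rw [invRev_getLast?] at hb
  rcases l.getLast?.eq_none_or_eq_some with h | ⟨p, h⟩ <;> rw [h] at ha
  · simp at ha
  rcases l.head?.eq_none_or_eq_some with h2 | ⟨q, h2⟩ <;> rw [h2] at hb
  · simp at hb
  simp only [Option.map_some, Option.some.injEq] at ha hb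
  subst ha; subst hb
  exact fun hab => (hl q p h2 h) hab.symm

/-- concatenation powers of a cyclically reduced word -/
theorem pow_list (l : List (Σ i, G i)) (hl : RL φ l) (hne : l ≠ []) (hcr : CRH l) :
    ∀ k : ℕ, 1 ≤ k → ∃ L : List (Σ i, G i), RL φ L ∧ L ≠ [] ∧
      L.head? = l.head? ∧ L.getLast? = l.getLast? ∧
      prodOf φ L = (prodOf φ l) ^ k ∧ L.length = k * l.length := by
  intro k hk
  induction k with
  | zero => omega
  | succ k ih =>
    rcases Nat.eq_or_lt_of_le hk with h1 | h2
    · exact ⟨l, hl, hne, rfl, rfl, by rw [← h1, pow_one], by rw [← h1, one_mul]⟩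
    · rcases ih (by omega) with ⟨L, hL, hLne, hLh, hLl, hLp, hLlen⟩
      refine ⟨l ++ L, ?_, by simp [hne], ?_, ?_, ?_, ?_⟩
      · constructor
        · rw [List.Chain', List.isChain_append]
          refine ⟨hl.1, hL.1, ?_⟩
          intro a ha b hb
          rw [hLh] at hb
          exact (hcr b a (Option.mem_def.1 hb) (Option.mem_def.1 ha)).symm
        · intro p hp
          rcases List.mem_append.1 hp with hp | hp
          · exact hl.2 p hp
          · exact hL.2 p hp
      · rw [List.head?_append_of_ne_nil _ hne]
      · rw [List.getLast?_append_of_ne_nil _ hLne, hLl]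
      · rw [prodOf_append, hLp, pow_succ']
      · simp [hLlen]; ring
end Cyc
section CycRed
variable {ι : Type*} {G : ι → Type*} {H : Type*} [∀ i, Group (G i)] [Group H]
  [DecidableEq ι] [∀ i, DecidableEq (G i)] [Nonempty ι]
  {φ : ∀ i, H →* G i} (d : Transversal φ)

theorem ell_zpow_cyc {l : List (Σ i, G i)} (hl : RL φ l) (hne : l ≠ []) (hcr : CRH l)
    (k : ℤ) (hk : k ≠ 0) : ell d ((prodOf φ l) ^ k) = k.natAbs * l.length := by
  have key : ∀ n : ℕ, 1 ≤ n → ell d ((prodOf φ l) ^ (n : ℕ)) = n * l.length := by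
    intro n hn
    rcases pow_list (φ := φ) l hl hne hcr n hn with ⟨L, hL, _, _, _, hLp, hLlen⟩
    rw [← hLp, ell_prodOf d hL, hLlen]
  have keyinv : ∀ n : ℕ, 1 ≤ n → ell d (((prodOf φ l) ^ (n : ℕ))⁻¹) = n * l.length := by
    intro n hn
    rcases pow_list (φ := φ) l hl hne hcr n hn with ⟨L, hL, _, _, _, hLp, hLlen⟩
    rw [← hLp, ← prodOf_invRev, ell_prodOf d (RL_invRev (φ := φ) hL)]
    rw [invRev_length, hLlen]
  rcases Int.natAbs_eq k with h | h
  · conv_lhs => rw [h]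
    rw [zpow_natCast, key k.natAbs (by omega)]
  · conv_lhs => rw [h]
    rw [zpow_neg, zpow_natCast, keyinv k.natAbs (by omega)]

theorem cyc_red : ∀ (n : ℕ) (x : PushoutI φ), ell d x = n →
    ∃ y : PushoutI φ, (∃ i u, y * x * y⁻¹ = PushoutI.of (φ := φ) i u) ∨
      (∃ l, RL φ l ∧ l ≠ [] ∧ CRH l ∧ y * x * y⁻¹ = prodOf φ l) := by
  intro n
  induction n using Nat.strong_induction_on with
  | _ n ih =>
  intro x hx
  rcases exists_decomp d x with ⟨c, l, hl, rfl, hlen⟩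
  rcases l with _ | ⟨p1, l2⟩
  · refine ⟨1, Or.inl ⟨Classical.arbitrary ι, φ _ c, ?_⟩⟩
    simp [of_apply_eq_base]
  rcases l2 with _ | ⟨p2, rest⟩
  · refine ⟨1, Or.inl ⟨p1.fst, φ p1.fst c * p1.snd, ?_⟩⟩
    simp [map_mul, of_apply_eq_base]
  have hl2ne : (p2 :: rest) ≠ [] := by simp
  obtain ⟨mid, q, hsplit⟩ : ∃ mid q, p2 :: rest = mid ++ [q] :=
    ⟨_, _, (List.dropLast_append_getLast hl2ne).symm⟩
  rw [hsplit] at hl hlen hx ⊢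
  have hmidRL : RL φ mid := by
    constructor
    · exact hl.1.infix ⟨[p1], [q], by simp⟩
    · intro p hp
      exact hl.2 p (List.mem_cons_of_mem _ (List.mem_append_left _ hp))
  rcases p1 with ⟨i1, a1⟩
  rcases q with ⟨iq, aq⟩
  have hp1mem : (⟨i1, a1⟩ : Σ i, G i) ∈ (⟨i1, a1⟩ : Σ i, G i) :: (mid ++ [⟨iq, aq⟩]) := by simp
  by_cases hpq : i1 = iq
  · -- conjugate by last letter, strictly shorter
    subst hpq
    set z := PushoutI.of (φ := φ) i1 aq with hz
    have h1 : prodOf φ ((⟨i1, a1⟩ : Σ i, G i) :: (mid ++ [⟨i1, aq⟩])) =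
        PushoutI.of (φ := φ) i1 a1 * (prodOf φ mid * z) := by
      simp [prodOf_append, prodOf_cons, mul_assoc, hz]
    have hx' : z * (base φ c * prodOf φ ((⟨i1, a1⟩ : Σ i, G i) :: (mid ++ [⟨i1, aq⟩]))) * z⁻¹ =
        PushoutI.of (φ := φ) i1 (aq * φ i1 c * a1) * prodOf φ mid := by
      rw [h1, ← of_apply_eq_base φ i1 c, hz]
      rw [map_mul, map_mul]
      group
    have hell : ell d (PushoutI.of (φ := φ) i1 (aq * φ i1 c * a1) * prodOf φ mid) < n := by
      have hb := ell_of_mul_prodOf_le d i1 (aq * φ i1 c * a1) hmidRL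
      rw [← hx] at *
      simp only [List.length_cons, List.length_append, List.length_singleton] at hlen
      omega
    rcases ih _ hell _ rfl with ⟨y', hy'⟩
    refine ⟨y' * z, ?_⟩
    have hconj : ∀ X : PushoutI φ, (y' * z) * X * (y' * z)⁻¹ = y' * (z * X * z⁻¹) * y'⁻¹ := by
      intro X; group
    rw [hconj, hx']
    exact hy'
  · -- already cyclically reduced after absorbing base
    refine ⟨1, Or.inr ⟨⟨i1, φ i1 c * a1⟩ :: (mid ++ [⟨iq, aq⟩]), ?_, by simp, ?_, ?_⟩⟩
    · constructor
      · refine List.IsChain.cons (hl.1.tail) ?_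
        intro b hb
        exact (List.isChain_cons.1 hl.1).1 b hb
      · intro p hp
        rcases List.mem_cons.1 hp with rfl | hp
        · have hp1 := hl.2 _ hp1mem
          constructor
          · intro h1
            exact hp1.2 ⟨c⁻¹, by rw [map_inv, inv_eq_iff_mul_eq_one]; exact h1⟩
          · rintro ⟨c', hc'⟩
            exact hp1.2 ⟨c⁻¹ * c', by rw [map_mul, map_inv, hc']; group⟩
        · exact hl.2 p (List.mem_cons_of_mem _ hp)
    · intro a b ha hb
      simp only [List.head?_cons, Option.some.injEq] at ha
      subst ha
      have hlast : ((⟨i1, φ i1 c * a1⟩ : Σ i, G i) :: (mid ++ [⟨iq, aq⟩])).getLast?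
          = some ⟨iq, aq⟩ := by
        rw [show (⟨i1, φ i1 c * a1⟩ : Σ i, G i) :: (mid ++ [⟨iq, aq⟩])
          = ((⟨i1, φ i1 c * a1⟩ : Σ i, G i) :: mid) ++ [⟨iq, aq⟩] by simp,
          List.getLast?_concat]
      rw [hlast] at hb
      simp only [Option.some.injEq] at hb
      subst hb
      exact hpq
    · rw [one_mul, inv_one, mul_one, prodOf_cons, prodOf_cons, ← mul_assoc,
        ← of_apply_eq_base φ i1 c, ← map_mul]
end CycRed
section Chain

variable {ι : Type*} {G : ι → Type*} {H : Type*} [∀ i, Group (G i)] [Group H]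

/-- one step of passing a conjugation through the amalgam -/
inductive ChainStep (φ : ∀ i, H →* G i) : (Σ i, G i) → (Σ i, G i) → Prop
  | conj (i : ι) (x u : G i) : ChainStep φ ⟨i, u⟩ ⟨i, x * u * x⁻¹⟩
  | transfer (i k : ι) (c : H) : ChainStep φ ⟨i, φ i c⟩ ⟨k, φ k c⟩

/-- conjugate into the base group -/
def Pc (φ : ∀ i, H →* G i) (i : ι) (u : G i) : Prop :=
  ∃ (a : G i) (c : H), a * u * a⁻¹ = φ i c

variable [DecidableEq ι] [∀ i, DecidableEq (G i)] [Nonempty ι]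
  {φ : ∀ i, H →* G i}

theorem chain_lemma_aux (d : Transversal φ) (hφ : ∀ i, Function.Injective (φ i))
    (l : List (Σ i, G i)) (hl : RL φ l) :
    ∀ (c₀ : H) (i : ι) (u : G i) (j : ι) (v : G j),
    (base φ c₀ * prodOf φ l) * PushoutI.of (φ := φ) i u * (base φ c₀ * prodOf φ l)⁻¹
      = PushoutI.of (φ := φ) j v →
    (∃ a : G i, PushoutI.of (φ := φ) i (a * u * a⁻¹) = PushoutI.of (φ := φ) j v) ∨
    (Pc φ i u ∧ Pc φ j v ∧ Relation.EqvGen (ChainStep φ) ⟨i, u⟩ ⟨j, v⟩) := by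
  induction l using List.reverseRecOn with
  | nil =>
    intro c₀ i u j v heq
    refine Or.inl ⟨φ i c₀, ?_⟩
    rw [← heq]
    simp only [prodOf_nil, mul_one, map_mul, map_inv, of_apply_eq_base]
  | append_singleton l' p ih =>
    rcases p with ⟨k, x⟩
    intro c₀ i u j v heq
    have hl' : RL φ l' := by
      refine ⟨hl.1.prefix ⟨[⟨k, x⟩], rfl⟩, fun p hp => hl.2 p (List.mem_append_left _ hp)⟩
    have ihl := ih hl'
    set hP : PushoutI φ := base φ c₀ * prodOf φ l' with hPdef
    have hdec : base φ c₀ * prodOf φ (l' ++ [⟨k, x⟩]) = hP * PushoutI.of (φ := φ) k x := by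
      rw [prodOf_append, hPdef]
      simp [mul_assoc]
    rw [hdec] at heq
    by_cases hki : k = i
    · subst hki
      have heq2 : hP * PushoutI.of (φ := φ) k (x * u * x⁻¹) * hP⁻¹
          = PushoutI.of (φ := φ) j v := by
        rw [← heq]
        simp only [map_mul, map_inv]
        group
      rcases ihl c₀ k (x * u * x⁻¹) j v heq2 with ⟨a, ha⟩ | ⟨⟨a, c, hac⟩, pcv, rel⟩
      · refine Or.inl ⟨a * x, ?_⟩
        rw [← ha]
        congr 1
        group
      · refine Or.inr ⟨⟨a * x, c, by rw [← hac]; group⟩, pcv, ?_⟩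
        exact Relation.EqvGen.trans _ _ _
          (Relation.EqvGen.rel _ _ (ChainStep.conj k x u)) rel
    · by_cases hur : u ∈ (φ i).range
      · rcases hur with ⟨c, rfl⟩
        have heq2 : hP * PushoutI.of (φ := φ) k (x * φ k c * x⁻¹) * hP⁻¹
            = PushoutI.of (φ := φ) j v := by
          rw [← heq, of_apply_eq_base φ i c, ← of_apply_eq_base φ k c]
          simp only [map_mul, map_inv]
          group
        rcases ihl c₀ k (x * φ k c * x⁻¹) j v heq2 with ⟨a, ha⟩ | ⟨_, pcv, rel⟩
        · rw [show a * (x * φ k c * x⁻¹) * a⁻¹ = (a * x) * φ k c * (a * x)⁻¹ by group] at ha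
          by_cases hkj : k = j
          · subst hkj
            have hv : v = (a * x) * φ k c * (a * x)⁻¹ := (of_injective hφ k ha).symm
            refine Or.inr ⟨⟨1, c, by group⟩, ⟨(a * x)⁻¹, c, by rw [hv]; group⟩, ?_⟩
            refine Relation.EqvGen.trans _ _ _
              (Relation.EqvGen.rel _ _ (ChainStep.transfer i k c)) ?_
            have := ChainStep.conj (φ := φ) k (a * x) (φ k c)
            rw [← hv] at this
            exact Relation.EqvGen.rel _ _ this
          · have hmem : PushoutI.of (φ := φ) j v ∈
                (PushoutI.of (φ := φ) k).range ⊓ (PushoutI.of (φ := φ) j).range :=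
              ⟨⟨_, ha⟩, ⟨v, rfl⟩⟩
            rw [inf_of_range_eq_base_range hφ hkj] at hmem
            rcases hmem with ⟨c'', hc''⟩
            have hveq : v = φ j c'' := by
              apply of_injective hφ j
              rw [← hc'', of_apply_eq_base]
            have hweq : (a * x) * φ k c * (a * x)⁻¹ = φ k c'' := by
              apply of_injective hφ k
              rw [ha, ← hc'', of_apply_eq_base]
            refine Or.inr ⟨⟨1, c, by group⟩, ⟨1, c'', by rw [hveq]; group⟩, ?_⟩
            refine Relation.EqvGen.trans _ _ _
              (Relation.EqvGen.rel _ _ (ChainStep.transfer i k c)) ?_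
            refine Relation.EqvGen.trans _ _ _
              (Relation.EqvGen.rel _ _ (ChainStep.conj k (a * x) (φ k c))) ?_
            rw [hweq, hveq]
            exact Relation.EqvGen.rel _ _ (ChainStep.transfer k j c'')
        · refine Or.inr ⟨⟨1, c, by group⟩, pcv, ?_⟩
          refine Relation.EqvGen.trans _ _ _
            (Relation.EqvGen.rel _ _ (ChainStep.transfer i k c)) ?_
          exact Relation.EqvGen.trans _ _ _
            (Relation.EqvGen.rel _ _ (ChainStep.conj k x (φ k c))) rel
      · by_cases hu1 : u = 1
        · subst hu1
          have h1 : PushoutI.of (φ := φ) j v = 1 := by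
            rw [← heq, map_one, mul_one, mul_inv_cancel]
          exact Or.inl ⟨1, by simp [h1]⟩
        · exfalso
          set L := l' ++ [⟨k, x⟩] with hLdef
          have hLlast : L.getLast? = some ⟨k, x⟩ := List.getLast?_concat
          have hinvhead : (invRev L).head? = some ⟨k, x⁻¹⟩ := by
            rw [invRev_head?, hLlast]; rfl
          have hRLinv : RL φ (invRev L) := RL_invRev (φ := φ) hl
          have hRLP : RL φ (L ++ (⟨i, u⟩ :: invRev L)) := by
            constructor
            · rw [List.Chain', List.isChain_append]
              refine ⟨hl.1, ?_, ?_⟩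
              · refine List.IsChain.cons hRLinv.1 ?_
                intro b hb
                rw [hinvhead] at hb
                simp only [Option.mem_def, Option.some.injEq] at hb
                subst hb
                exact fun h => hki h.symm
              · intro a ha b hb
                rw [hLlast] at ha
                simp only [Option.mem_def, Option.some.injEq, List.head?_cons] at ha hb
                subst ha; subst hb
                exact hki
            · intro p hp
              rcases List.mem_append.1 hp with hp | hp
              · exact hl.2 p hp
              · rcases List.mem_cons.1 hp with rfl | hp
                · exact ⟨hu1, hur⟩
                · exact hRLinv.2 p hp
          have hbig : hP * PushoutI.of (φ := φ) k x = base φ c₀ * prodOf φ L := by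
            rw [hPdef, hLdef, prodOf_append]
            simp [mul_assoc]
          have hstep1 : prodOf φ L * PushoutI.of (φ := φ) i u * (prodOf φ L)⁻¹
              = (base φ c₀)⁻¹ * PushoutI.of (φ := φ) j v * base φ c₀ := by
            rw [← heq, hbig]
            group
          have hprod : prodOf φ (L ++ (⟨i, u⟩ :: invRev L))
              = PushoutI.of (φ := φ) j (φ j c₀⁻¹ * v * φ j c₀) := by
            rw [prodOf_append, prodOf_cons, prodOf_invRev, ← mul_assoc, hstep1]
            simp only [map_mul, of_apply_eq_base, map_inv]
          have e2 : ell d (prodOf φ (L ++ (⟨i, u⟩ :: invRev L))) ≤ 1 := by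
            rw [hprod]
            exact ell_of_le_one d j _
          have e1 : ell d (prodOf φ (L ++ (⟨i, u⟩ :: invRev L)))
              = (L ++ (⟨i, u⟩ :: invRev L)).length := ell_prodOf d hRLP
          rw [e1] at e2
          simp only [List.length_append, List.length_cons, invRev_length, hLdef,
            List.length_singleton] at e2
          omega
end Chain
section OrderHelpers

variable {Γ : Type*} [Group Γ]

theorem zpow_eq_one_imp {g : Γ} {k : ℤ} (h : g ^ k = 1) (hk : k ≠ 0) : IsOfFinOrder g := by
  have h2 : g ^ ((k.natAbs : ℤ)) = 1 := by
    rcases Int.natAbs_eq k with h' | h'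
    · rw [← h']; exact h
    · rw [show ((k.natAbs : ℤ)) = -k by omega, zpow_neg, h, inv_one]
  rw [zpow_natCast] at h2
  exact isOfFinOrder_iff_pow_eq_one.2 ⟨k.natAbs, by omega, h2⟩

theorem notFin_zpow {g : Γ} (hg : ¬IsOfFinOrder g) {k : ℤ} (hk : k ≠ 0) :
    ¬IsOfFinOrder (g ^ k) := by
  intro hf
  rcases isOfFinOrder_iff_pow_eq_one.1 hf with ⟨p, hp, hpe⟩
  refine hg (zpow_eq_one_imp (k := k * p) ?_ (by positivity))
  rw [zpow_mul, zpow_natCast]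
  exact hpe

theorem notFin_hom {Δ : Type*} [Group Δ] (f : Γ →* Δ) (hf : Function.Injective f) {g : Γ}
    (hg : ¬IsOfFinOrder g) : ¬IsOfFinOrder (f g) := by
  intro hfin
  rcases isOfFinOrder_iff_pow_eq_one.1 hfin with ⟨p, hp, he⟩
  refine hg (isOfFinOrder_iff_pow_eq_one.2 ⟨p, hp, hf ?_⟩)
  rw [map_pow, he, map_one]

theorem notFin_conj {g a : Γ} (hg : ¬IsOfFinOrder g) : ¬IsOfFinOrder (a * g * a⁻¹) := by
  intro hfin
  rcases isOfFinOrder_iff_pow_eq_one.1 hfin with ⟨p, hp, he⟩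
  rw [conj_pow] at he
  refine hg (isOfFinOrder_iff_pow_eq_one.2 ⟨p, hp, ?_⟩)
  have := congrArg (fun w => a⁻¹ * w * a) he
  simpa [mul_assoc] using this

theorem fin_of_conj_eq {g a : Γ} {x : Γ} (h : a * g * a⁻¹ = x) (hx : IsOfFinOrder x) :
    IsOfFinOrder g := by
  by_contra hg
  exact notFin_conj hg (h ▸ hx)

end OrderHelpers

def IsBalancedGroup' (G : Type*) [Group G] : Prop :=
  ∀ g : G, ¬ IsOfFinOrder g → ∀ h : G, ∀ n m : ℤ, h * g ^ n * h⁻¹ = g ^ m → |n| = |m|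

section Invariant

variable {ι : Type*} {G : ι → Type*} {H : Type*} [∀ i, Group (G i)] [Group H]
  {φ : ∀ i, H →* G i}

/-- witness that a power of `p.snd` is conjugate to a power of `z` in the base -/
def Nu (φ : ∀ i, H →* G i) (z : H) (p : Σ i, G i) (s t : ℤ) : Prop :=
  s ≠ 0 ∧ ∃ a : G p.fst, a * p.snd ^ s * a⁻¹ = φ p.fst (z ^ t)

theorem nu_ratio (hφ : ∀ i, Function.Injective (φ i)) (hbal : ∀ i, IsBalancedGroup' (G i))
    (z : H) (hz : ¬IsOfFinOrder z) (p : Σ i, G i) {s t s' t' : ℤ} (h1 : Nu φ z p s t) (h2 : Nu φ z p s' t') :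
    t.natAbs * s'.natAbs = t'.natAbs * s.natAbs := by
  obtain ⟨hs, a, ha⟩ := h1
  obtain ⟨hs', a', ha'⟩ := h2
  have e1 : a * p.snd ^ (s * s') * a⁻¹ = φ p.fst (z ^ (t * s')) := by
    rw [zpow_mul, ← conj_zpow, ha, ← map_zpow, ← zpow_mul]
  have e2 : a' * p.snd ^ (s * s') * a'⁻¹ = φ p.fst (z ^ (t' * s)) := by
    rw [mul_comm s s', zpow_mul, ← conj_zpow, ha', ← map_zpow, ← zpow_mul]
  have e3 : (a' * a⁻¹) * (φ p.fst z) ^ (t * s') * (a' * a⁻¹)⁻¹ = (φ p.fst z) ^ (t' * s) := by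
    rw [← map_zpow, ← map_zpow, ← e1, ← e2]
    group
  have habs := hbal p.fst (φ p.fst z) (notFin_hom _ (hφ p.fst) hz) (a' * a⁻¹) _ _ e3
  have : (t * s').natAbs = (t' * s).natAbs := by
    rw [Int.abs_eq_natAbs, Int.abs_eq_natAbs] at habs
    exact_mod_cast habs
  simpa [Int.natAbs_mul] using this

theorem nu_conj (z : H) (i : ι) (x u : G i) (s t : ℤ) :
    Nu φ z ⟨i, u⟩ s t ↔ Nu φ z ⟨i, x * u * x⁻¹⟩ s t := by
  constructor
  · rintro ⟨hs, a, ha⟩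
    refine ⟨hs, a * x⁻¹, ?_⟩
    show a * x⁻¹ * (x * u * x⁻¹) ^ s * (a * x⁻¹)⁻¹ = _
    rw [conj_zpow, ← ha]
    group
  · rintro ⟨hs, a, ha⟩
    refine ⟨hs, a * x, ?_⟩
    show a * x * u ^ s * (a * x)⁻¹ = _
    rw [← ha]
    show _ = a * (x * u * x⁻¹) ^ s * a⁻¹
    rw [conj_zpow]
    group

/-- the invariant preserved along chains -/
def GoodPair (φ : ∀ i, H →* G i) (z : H) (p q : Σ i, G i) : Prop :=
  ((∃ s t, Nu φ z p s t) ↔ (∃ s t, Nu φ z q s t)) ∧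
  ∀ s t s' t', Nu φ z p s t → Nu φ z q s' t' →
    t.natAbs * s'.natAbs = t'.natAbs * s.natAbs

theorem good_of_eqvgen (hφ : ∀ i, Function.Injective (φ i))
    (hbal : ∀ i, IsBalancedGroup' (G i)) (z : H) (hz : ¬IsOfFinOrder z) (N : ℕ) (hN : N ≠ 0)
    (hQ : ∀ c : H, ∃ t : ℤ, c ^ N = z ^ t)
    {p q : Σ i, G i} (h : Relation.EqvGen (ChainStep φ) p q) :
    GoodPair φ z p q := by
  induction h with
  | rel p q hstep =>
    cases hstep with
    | conj i x u =>
      constructor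
      · exact ⟨fun ⟨s, t, hn⟩ => ⟨s, t, (nu_conj z i x u s t).1 hn⟩,
          fun ⟨s, t, hn⟩ => ⟨s, t, (nu_conj z i x u s t).2 hn⟩⟩
      · intro s t s' t' h1 h2
        exact nu_ratio hφ hbal z hz _ h1 ((nu_conj z i x u s' t').2 h2)
    | transfer i k c =>
      obtain ⟨tc, htc⟩ := hQ c
      have hnu : ∀ j : ι, Nu φ z ⟨j, φ j c⟩ (N : ℤ) tc := by
        intro j
        refine ⟨by exact_mod_cast hN, 1, ?_⟩
        show 1 * (φ j c) ^ ((N : ℤ)) * 1⁻¹ = φ j (z ^ tc)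
        rw [zpow_natCast, ← map_pow, htc]
        group
      constructor
      · exact ⟨fun _ => ⟨_, _, hnu k⟩, fun _ => ⟨_, _, hnu i⟩⟩
      · intro s t s' t' h1 h2
        have r1 := nu_ratio hφ hbal z hz _ h1 (hnu i)
        have r2 := nu_ratio hφ hbal z hz _ (hnu k) h2
        simp only [Int.natAbs_natCast] at r1 r2
        rcases Nat.eq_zero_or_pos tc.natAbs with h0 | hpos
        · rw [h0] at r1 r2
          simp at r1 r2
          have ht : t = 0 := r1.resolve_right hN
          have ht' : t' = 0 := r2.resolve_right hN
          simp [ht, ht']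
        · have key : t.natAbs * s'.natAbs * (N * tc.natAbs)
              = t'.natAbs * s.natAbs * (N * tc.natAbs) := by
            calc t.natAbs * s'.natAbs * (N * tc.natAbs)
                = (t.natAbs * N) * (tc.natAbs * s'.natAbs) := by ring
              _ = (tc.natAbs * s.natAbs) * (t'.natAbs * N) := by rw [r1, r2]
              _ = t'.natAbs * s.natAbs * (N * tc.natAbs) := by ring
          exact Nat.eq_of_mul_eq_mul_right (by positivity) key
  | refl p =>
    exact ⟨Iff.rfl, fun s t s' t' h1 h2 => nu_ratio hφ hbal z hz _ h1 h2⟩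
  | symm p q _ ihg =>
    exact ⟨ihg.1.symm, fun s t s' t' h1 h2 => (ihg.2 s' t' s t h2 h1).symm⟩
  | trans p q r _ _ ih1 ih2 =>
    refine ⟨ih1.1.trans ih2.1, ?_⟩
    intro s t s' t' h1 h2
    rcases (ih1.1.1 ⟨s, t, h1⟩) with ⟨σ, τ, hq⟩
    have r1 := ih1.2 s t σ τ h1 hq
    have r2 := ih2.2 σ τ s' t' hq h2
    have hσ : σ.natAbs ≠ 0 := by
      have := hq.1; omega
    rcases Nat.eq_zero_or_pos τ.natAbs with h0 | hpos
    · rw [h0] at r1 r2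
      simp at r1 r2
      have ht : t = 0 := r1.resolve_right hq.1
      have ht' : t' = 0 := r2.resolve_right hq.1
      simp [ht, ht']
    · have key : t.natAbs * s'.natAbs * (σ.natAbs * τ.natAbs)
          = t'.natAbs * s.natAbs * (σ.natAbs * τ.natAbs) := by
        calc t.natAbs * s'.natAbs * (σ.natAbs * τ.natAbs)
            = (t.natAbs * σ.natAbs) * (τ.natAbs * s'.natAbs) := by ring
          _ = (τ.natAbs * s.natAbs) * (t'.natAbs * σ.natAbs) := by rw [r1, r2]
          _ = t'.natAbs * s.natAbs * (σ.natAbs * τ.natAbs) := by ring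
      exact Nat.eq_of_mul_eq_mul_right (by positivity) key

end Invariant
section ZN

theorem exists_zN {H : Type*} [Group H]
    (hvc : ∃ Z : Subgroup H, IsCyclic Z ∧ Z.FiniteIndex) (c : H) (hc : ¬IsOfFinOrder c) :
    ∃ (z : H) (N : ℕ), ¬IsOfFinOrder z ∧ N ≠ 0 ∧ ∀ x : H, ∃ t : ℤ, x ^ N = z ^ t := by
  obtain ⟨Z, hZcyc, hZfi⟩ := hvc
  have hcyc : IsCyclic Z.normalCore := by
    have hle := Z.normalCore_le
    haveI := hZcyc
    exact isCyclic_of_surjective (Subgroup.subgroupOfEquivOfLe hle)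
      (Subgroup.subgroupOfEquivOfLe hle).surjective
  obtain ⟨zeta, hzeta⟩ := hcyc.exists_generator
  have hQ : ∀ x : H, ∃ t : ℤ, x ^ Z.normalCore.index = (zeta : H) ^ t := by
    intro x
    have hx : x ^ Z.normalCore.index ∈ Z.normalCore := Subgroup.pow_index_mem _ x
    obtain ⟨t, ht⟩ := hzeta ⟨x ^ Z.normalCore.index, hx⟩
    refine ⟨t, ?_⟩
    have := congrArg (fun w : Z.normalCore => (w : H)) ht
    simp only at this
    rw [← this]
    push_cast
    ring_nf
  have hzfin : ¬IsOfFinOrder (zeta : H) := by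
    obtain ⟨t, ht⟩ := hQ c
    intro hf
    have h1 : IsOfFinOrder (c ^ Z.normalCore.index) := ht ▸ hf.zpow
    rcases isOfFinOrder_iff_pow_eq_one.1 h1 with ⟨p, hp, hpe⟩
    refine hc (isOfFinOrder_iff_pow_eq_one.2 ⟨Z.normalCore.index * p, ?_, by rw [pow_mul]; exact hpe⟩)
    have hind : Z.normalCore.index ≠ 0 := Subgroup.FiniteIndex.index_ne_zero
    positivity
  exact ⟨zeta, Z.normalCore.index, hzfin, Subgroup.FiniteIndex.index_ne_zero, hQ⟩

end ZN

section Main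

variable {ι : Type*} {G : ι → Type*} {H : Type*} [∀ i, Group (G i)] [Group H]
  [DecidableEq ι] [∀ i, DecidableEq (G i)] [Nonempty ι]
  {φ : ∀ i, H →* G i}

theorem chain_lemma (d : Transversal φ) (hφ : ∀ i, Function.Injective (φ i))
    (h : PushoutI φ) (i : ι) (u : G i) (j : ι) (v : G j)
    (heq : h * PushoutI.of (φ := φ) i u * h⁻¹ = PushoutI.of (φ := φ) j v) :
    (∃ a : G i, PushoutI.of (φ := φ) i (a * u * a⁻¹) = PushoutI.of (φ := φ) j v) ∨
    (Pc φ i u ∧ Pc φ j v ∧ Relation.EqvGen (ChainStep φ) ⟨i, u⟩ ⟨j, v⟩) := by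
  rcases exists_decomp d h with ⟨c, l, hl, hdec, -⟩
  rw [hdec] at heq
  exact chain_lemma_aux d hφ l hl c i u j v heq

theorem pushout_balanced (d : Transversal φ) (hφ : ∀ i, Function.Injective (φ i))
    (hbal : ∀ i, IsBalancedGroup' (G i))
    (hvc : ∃ Z : Subgroup H, IsCyclic Z ∧ Z.FiniteIndex) :
    IsBalancedGroup' (PushoutI φ) := by
  intro g0 hg0 h n m heq
  by_cases hn0 : n = 0
  · subst hn0
    have h1 : g0 ^ m = 1 := by rw [← heq]; simp
    have h2 : m = 0 := by
      by_contra hm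
      exact hg0 (zpow_eq_one_imp h1 hm)
    simp [h2]
  by_cases hm0 : m = 0
  · rw [hm0, zpow_zero] at heq
    have h1 : g0 ^ n = 1 := by
      have := congrArg (fun w => h⁻¹ * w * h) heq
      simpa [mul_assoc] using this
    exact absurd (zpow_eq_one_imp h1 hn0) hg0
  rcases cyc_red d (ell d g0) g0 rfl with ⟨y, ⟨i, u, hu⟩ | ⟨l, hRL, hlne, hcr, hl⟩⟩
  · -- elliptic case
    have hofu : ¬IsOfFinOrder (PushoutI.of (φ := φ) i u) := by
      rw [← hu]
      exact notFin_conj hg0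
    have hufin : ¬IsOfFinOrder u := fun hf => hofu (MonoidHom.isOfFinOrder _ hf)
    have heq2 : (y * h * y⁻¹) * (PushoutI.of (φ := φ) i u) ^ n * (y * h * y⁻¹)⁻¹
        = (PushoutI.of (φ := φ) i u) ^ m := by
      rw [← hu, conj_zpow, conj_zpow,
        show (y * h * y⁻¹) * (y * g0 ^ n * y⁻¹) * (y * h * y⁻¹)⁻¹
          = y * (h * g0 ^ n * h⁻¹) * y⁻¹ by group, heq]
    rw [← map_zpow, ← map_zpow] at heq2
    rcases chain_lemma d hφ _ i (u ^ n) i (u ^ m) heq2 with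
      ⟨a, ha⟩ | ⟨⟨a, c, hac⟩, ⟨b, c', hbc⟩, rel⟩
    · exact hbal i u hufin a n m (of_injective hφ i ha)
    · have hupow_n : ¬IsOfFinOrder (u ^ n) := notFin_zpow hufin hn0
      have hupow_m : ¬IsOfFinOrder (u ^ m) := notFin_zpow hufin hm0
      have hcfin : ¬IsOfFinOrder c := by
        intro hf
        exact hupow_n (fin_of_conj_eq hac (MonoidHom.isOfFinOrder _ hf))
      have hc'fin : ¬IsOfFinOrder c' := by
        intro hf
        exact hupow_m (fin_of_conj_eq hbc (MonoidHom.isOfFinOrder _ hf))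
      obtain ⟨z, N, hzfin, hN, hQ⟩ := exists_zN hvc c hcfin
      obtain ⟨t, ht⟩ := hQ c
      obtain ⟨t', ht'⟩ := hQ c'
      have htne : t ≠ 0 := by
        intro h0
        rw [h0, zpow_zero] at ht
        exact hcfin (isOfFinOrder_iff_pow_eq_one.2 ⟨N, by omega, ht⟩)
      have ht'ne : t' ≠ 0 := by
        intro h0
        rw [h0, zpow_zero] at ht'
        exact hc'fin (isOfFinOrder_iff_pow_eq_one.2 ⟨N, by omega, ht'⟩)
      have hnu1 : Nu φ z ⟨i, u ^ n⟩ (N : ℤ) t := by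
        refine ⟨by exact_mod_cast hN, a, ?_⟩
        show a * (u ^ n) ^ ((N : ℤ)) * a⁻¹ = φ i (z ^ t)
        rw [← conj_zpow, hac, ← map_zpow, zpow_natCast, ht]
      have hnu2 : Nu φ z ⟨i, u ^ m⟩ (N : ℤ) t' := by
        refine ⟨by exact_mod_cast hN, b, ?_⟩
        show b * (u ^ m) ^ ((N : ℤ)) * b⁻¹ = φ i (z ^ t')
        rw [← conj_zpow, hbc, ← map_zpow, zpow_natCast, ht']
      have good := good_of_eqvgen hφ hbal z hzfin N hN hQ rel
      have hr := good.2 _ _ _ _ hnu1 hnu2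
      simp only [Int.natAbs_natCast] at hr
      have htt' : t.natAbs = t'.natAbs := Nat.eq_of_mul_eq_mul_right (by omega) hr
      -- the final computation
      have h1 : (a * u * a⁻¹) ^ n = φ i c := by rw [conj_zpow, hac]
      have h2 : (b * u * b⁻¹) ^ m = φ i c' := by rw [conj_zpow, hbc]
      have e12 : b * u * b⁻¹ = (b * a⁻¹) * (a * u * a⁻¹) * (b * a⁻¹)⁻¹ := by group
      have eA : (b * u * b⁻¹) ^ (m * (N : ℤ) * n) = (φ i z) ^ (t' * n) := by
        calc (b * u * b⁻¹) ^ (m * (N : ℤ) * n) = (((b * u * b⁻¹) ^ m) ^ ((N : ℤ))) ^ n := by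
              rw [zpow_mul, zpow_mul]
          _ = (φ i (z ^ t')) ^ n := by rw [h2, ← map_zpow, zpow_natCast, ht']
          _ = (φ i z) ^ (t' * n) := by rw [← map_zpow, ← zpow_mul, map_zpow]
      have hinner : (a * u * a⁻¹) ^ (n * (N : ℤ) * m) = (φ i z) ^ (t * m) := by
        calc ((a * u * a⁻¹) ^ (n * (N : ℤ) * m)) = (((a * u * a⁻¹) ^ n) ^ ((N : ℤ))) ^ m := by
              rw [zpow_mul, zpow_mul]
          _ = (φ i (z ^ t)) ^ m := by rw [h1, ← map_zpow, zpow_natCast, ht]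
          _ = (φ i z) ^ (t * m) := by rw [← map_zpow, ← zpow_mul, map_zpow]
      have eB : (b * u * b⁻¹) ^ (m * (N : ℤ) * n)
          = (b * a⁻¹) * (φ i z) ^ (t * m) * (b * a⁻¹)⁻¹ := by
        rw [show m * (N : ℤ) * n = n * (N : ℤ) * m by ring, e12, conj_zpow, hinner]
      have efin : (b * a⁻¹) * (φ i z) ^ (t * m) * (b * a⁻¹)⁻¹ = (φ i z) ^ (t' * n) := by
        rw [← eB, eA]
      have habs := hbal i (φ i z) (notFin_hom _ (hφ i) hzfin) (b * a⁻¹) _ _ efin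
      rw [Int.abs_eq_natAbs, Int.abs_eq_natAbs] at habs ⊢
      have habs' : (t * m).natAbs = (t' * n).natAbs := by exact_mod_cast habs
      rw [Int.natAbs_mul, Int.natAbs_mul] at habs'
      rw [htt'] at habs'
      have : m.natAbs = n.natAbs := by
        refine Nat.eq_of_mul_eq_mul_left ?_ habs'
        omega
      exact_mod_cast this.symm
  · -- hyperbolic case
    have hyg : y * g0 * y⁻¹ = prodOf φ l := hl
    have heq2 : ∀ k : ℤ, (y * h * y⁻¹) * (prodOf φ l) ^ (n * k) * (y * h * y⁻¹)⁻¹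
        = (prodOf φ l) ^ (m * k) := by
      intro k
      rw [← hyg]
      have base : (y * h * y⁻¹) * (y * g0 * y⁻¹) ^ (n * k) * (y * h * y⁻¹)⁻¹
          = y * (h * g0 ^ (n * k) * h⁻¹) * y⁻¹ := by
        rw [conj_zpow]; group
      rw [base, conj_zpow]
      congr 1
      rw [zpow_mul, zpow_mul, ← conj_zpow, heq]
    have hbound : ∀ (w : PushoutI φ) (p q : ℤ), (w * (prodOf φ l) ^ p * w⁻¹
        = (prodOf φ l) ^ q) → p ≠ 0 → q ≠ 0 →
        q.natAbs * l.length ≤ (ell d w + ell d w⁻¹) + p.natAbs * l.length := by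
      intro w p q hpq hp hq
      have e1 : ell d ((prodOf φ l) ^ q) = q.natAbs * l.length := ell_zpow_cyc d hRL hlne hcr q hq
      have e2 : ell d ((prodOf φ l) ^ p) = p.natAbs * l.length := ell_zpow_cyc d hRL hlne hcr p hp
      have e3 : ell d (w * (prodOf φ l) ^ p * w⁻¹)
          ≤ ell d w + ell d ((prodOf φ l) ^ p) + ell d w⁻¹ := by
        calc ell d _ ≤ ell d (w * (prodOf φ l) ^ p) + ell d w⁻¹ := ell_mul_le d _ _
          _ ≤ ell d w + ell d ((prodOf φ l) ^ p) + ell d w⁻¹ := by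
              have := ell_mul_le d w ((prodOf φ l) ^ p)
              omega
      rw [hpq, e1, e2] at e3
      omega
    set w0 := y * h * y⁻¹ with hw0
    set K := ell d w0 + ell d w0⁻¹ with hK
    have hL1 : 1 ≤ l.length := by
      rcases l with _ | ⟨p, l⟩
      · exact absurd rfl hlne
      · simp
    have hKk : ((K : ℤ) + 1) ≠ 0 := by positivity
    have hmn : m.natAbs ≤ n.natAbs := by
      by_contra hlt
      push_neg at hlt
      have hk := heq2 ((K : ℤ) + 1)
      have hb := hbound w0 _ _ hk (by positivity) (by positivity)
      have habs1 : (m * ((K : ℤ) + 1)).natAbs = m.natAbs * (K + 1) := by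
        rw [Int.natAbs_mul, show ((K:ℤ)+1).natAbs = K + 1 by omega]
      have habs2 : (n * ((K : ℤ) + 1)).natAbs = n.natAbs * (K + 1) := by
        rw [Int.natAbs_mul, show ((K:ℤ)+1).natAbs = K + 1 by omega]
      rw [habs1, habs2] at hb
      have h5 : (n.natAbs + 1) * (K + 1) * l.length ≤ m.natAbs * (K + 1) * l.length := by
        have hx : n.natAbs + 1 ≤ m.natAbs := by omega
        exact Nat.mul_le_mul_right _ (Nat.mul_le_mul_right _ hx)
      have h6 : (n.natAbs + 1) * (K + 1) * l.length
          = n.natAbs * (K + 1) * l.length + (K + 1) * l.length := by ring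
      have h7 : K + 1 ≤ (K + 1) * l.length := Nat.le_mul_of_pos_right _ (by omega)
      omega
    have hnm : n.natAbs ≤ m.natAbs := by
      by_contra hlt
      push_neg at hlt
      have hk := heq2 ((K : ℤ) + 1)
      have hk' : w0⁻¹ * (prodOf φ l) ^ (m * ((K : ℤ) + 1)) * (w0⁻¹)⁻¹
          = (prodOf φ l) ^ (n * ((K : ℤ) + 1)) := by
        rw [← hk]; group
      have hb := hbound w0⁻¹ _ _ hk' (by positivity) (by positivity)
      rw [inv_inv] at hb
      have habs1 : (m * ((K : ℤ) + 1)).natAbs = m.natAbs * (K + 1) := by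
        rw [Int.natAbs_mul, show ((K:ℤ)+1).natAbs = K + 1 by omega]
      have habs2 : (n * ((K : ℤ) + 1)).natAbs = n.natAbs * (K + 1) := by
        rw [Int.natAbs_mul, show ((K:ℤ)+1).natAbs = K + 1 by omega]
      rw [habs1, habs2] at hb
      have h5 : (m.natAbs + 1) * (K + 1) * l.length ≤ n.natAbs * (K + 1) * l.length := by
        have hx : m.natAbs + 1 ≤ n.natAbs := by omega
        exact Nat.mul_le_mul_right _ (Nat.mul_le_mul_right _ hx)
      have h6 : (m.natAbs + 1) * (K + 1) * l.length
          = m.natAbs * (K + 1) * l.length + (K + 1) * l.length := by ring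
      have h7 : K + 1 ≤ (K + 1) * l.length := Nat.le_mul_of_pos_right _ (by omega)
      omega
    rw [Int.abs_eq_natAbs, Int.abs_eq_natAbs]
    exact_mod_cast Nat.le_antisymm hnm hmn

end Main


theorem balanced_amalgamated_product_over_virtually_cyclic
    {A B C : Type u} [Group A] [Group B] [Group C]
    (hC : ∃ Z : Subgroup C, IsCyclic Z ∧ Z.FiniteIndex)
    (f : C →* A) (g : C →* B)
    (hf : Function.Injective f) (hg : Function.Injective g)
    (hA : IsBalancedGroup A) (hB : IsBalancedGroup B) :
    IsBalancedGroup (AmalgamatedProduct f g) := by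
  classical
  have hφ : ∀ b, Function.Injective ((famHom f g) b) := by
    intro b
    cases b
    · exact hg
    · exact hf
  have hbal : ∀ b, IsBalancedGroup' (fam A B b) := by
    intro b
    cases b
    · exact hB
    · exact hA
  obtain ⟨d⟩ := Monoid.PushoutI.NormalWord.transversal_nonempty (famHom f g) hφ
  exact pushout_balanced d hφ hbal hC
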